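/- Let Γ be an infinite subsemigroup of the n×n integer matrices M(n,ℤ) acting irreducibly on ℝⁿ (no nontrivial proper Γ-invariant subspace). Then the induced action of Γ on the torus 𝕋ⁿ = ℝⁿ/ℤⁿ is expansive. -/

import Mathlib

open scoped Matrix

section TorusExpansiveAux

private noncomputable def texPhi : ℝ →+ AddCircle (1:ℝ) :=
  QuotientAddGroup.mk' (AddSubgroup.zmultiples (1:ℝ))

private lemma texPhi_apply (r : ℝ) : texPhi r = (r : AddCircle (1:ℝ)) := rfl

private lemma tex_exists_rep (y : AddCircle (1:ℝ)) :
    ∃ r : ℝ, (r : AddCircle (1:ℝ)) = y ∧ |r| = ‖y‖ := by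
  induction y using QuotientAddGroup.induction_on with
  | H r =>
    refine ⟨r - round r, ?_, ?_⟩
    · have h0 : (((round r : ℝ)) : AddCircle (1:ℝ)) = 0 := by
        rw [AddCircle.coe_eq_zero_iff]
        exact ⟨round r, by simp⟩
      rw [QuotientAddGroup.mk_sub, h0, sub_zero]
    · rw [AddCircle.norm_eq]
      norm_num
private lemma tex_rep_unique {a b : ℝ} (ha : |a| < 2⁻¹) (hb : |b| < 2⁻¹)
    (h : (a : AddCircle (1:ℝ)) = b) : a = b := by
  have h0 : ((a - b : ℝ) : AddCircle (1:ℝ)) = 0 := by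
    rw [QuotientAddGroup.mk_sub, h, sub_self]
  rw [AddCircle.coe_eq_zero_iff] at h0
  obtain ⟨k, hk⟩ := h0
  have hk' : (k : ℝ) = a - b := by simpa using hk
  have h1 : |(k : ℝ)| < 1 := by
    rw [hk']
    calc |a - b| ≤ |a| + |b| := abs_sub _ _
    _ < 1 := by linarith
  have h2 : k = 0 := by
    have := abs_lt.mp h1
    have h3 : (-1 : ℝ) < (k:ℝ) := this.1
    have h4 : ((k:ℝ)) < 1 := this.2
    have h5 : (-1 : ℤ) < k := by exact_mod_cast h3
    have h6 : k < 1 := by exact_mod_cast h4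
    omega
  rw [h2] at hk'
  simp at hk'
  linarith [hk'.symm ▸ (rfl : a - b = a - b)]

private lemma tex_coe_mulVec {n : ℕ} (A : Matrix (Fin n) (Fin n) ℤ) (v : Fin n → ℝ) (i : Fin n) :
    (((A.map (Int.cast : ℤ → ℝ) *ᵥ v) i : ℝ) : AddCircle (1:ℝ))
      = ∑ j, A i j • ((v j : ℝ) : AddCircle (1:ℝ)) := by
  have h1 : (A.map (Int.cast : ℤ → ℝ) *ᵥ v) i = ∑ j, (A i j : ℝ) * v j := by
    simp [Matrix.mulVec, dotProduct, Matrix.map_apply]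
  rw [h1, ← texPhi_apply, map_sum]
  refine Finset.sum_congr rfl fun j _ => ?_
  rw [show (A i j : ℝ) * v j = A i j • v j by rw [zsmul_eq_mul]]
  rw [map_zsmul, texPhi_apply]

private lemma tex_act_mul {n : ℕ} (A B : Matrix (Fin n) (Fin n) ℤ)
    (x : Fin n → AddCircle (1:ℝ)) (i : Fin n) :
    ∑ j, (A * B) i j • x j = ∑ k, A i k • ∑ j, B k j • x j := by
  simp only [Matrix.mul_apply, Finset.sum_smul, mul_smul, Finset.smul_sum]
  exact Finset.sum_comm

private lemma tex_act_one {n : ℕ} (x : Fin n → AddCircle (1:ℝ)) (i : Fin n) :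
    ∑ j, (1 : Matrix (Fin n) (Fin n) ℤ) i j • x j = x i := by
  simp [Matrix.one_apply, ite_smul]

private lemma tex_mulVec_bound {n : ℕ} (A : Matrix (Fin n) (Fin n) ℤ) (v : Fin n → ℝ) (i : Fin n) :
    |(A.map (Int.cast : ℤ → ℝ) *ᵥ v) i| ≤ (∑ p, ∑ q, |(A p q : ℝ)|) * ‖v‖ := by
  have h1 : (A.map (Int.cast : ℤ → ℝ) *ᵥ v) i = ∑ j, (A i j : ℝ) * v j := by
    simp [Matrix.mulVec, dotProduct, Matrix.map_apply]
  rw [h1]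
  calc |∑ j, (A i j : ℝ) * v j| ≤ ∑ j, |(A i j : ℝ) * v j| := Finset.abs_sum_le_sum_abs _ _
    _ ≤ ∑ j, |(A i j : ℝ)| * ‖v‖ := by
        refine Finset.sum_le_sum fun j _ => ?_
        rw [abs_mul]
        exact mul_le_mul_of_nonneg_left
          ((Real.norm_eq_abs (v j) ▸ norm_le_pi_norm v j)) (abs_nonneg _)
    _ = (∑ j, |(A i j : ℝ)|) * ‖v‖ := (Finset.sum_mul _ _ _).symm
    _ ≤ (∑ p, ∑ q, |(A p q : ℝ)|) * ‖v‖ := by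
        refine mul_le_mul_of_nonneg_right ?_ (norm_nonneg _)
        exact Finset.single_le_sum (f := fun p => ∑ q, |(A p q : ℝ)|)
          (fun p _ => Finset.sum_nonneg fun q _ => abs_nonneg _) (Finset.mem_univ i)

private lemma tex_map_mul {n : ℕ} (A B : Matrix (Fin n) (Fin n) ℤ) :
    (A * B).map (Int.cast : ℤ → ℝ) = A.map (Int.cast : ℤ → ℝ) * B.map (Int.cast : ℤ → ℝ) := by
  ext i j
  simp [Matrix.mul_apply, Matrix.map_apply]

end TorusExpansiveAux

/-- Let `Γ` be an infinite subsemigroup of `M(n, ℤ)` acting irreducibly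
on `ℝⁿ`.  Then the induced endomorphism action of `Γ` on the torus `𝕋ⁿ = ℝⁿ/ℤⁿ`
(realized as `Fin n → AddCircle 1`, on which `A ∈ M(n, ℤ)` acts by
`x ↦ (i ↦ ∑ j, A i j • x j)`) is expansive. -/
theorem torus_action_expansive
    {n : ℕ} (Γ : Set (Matrix (Fin n) (Fin n) ℤ))
    (hmul : ∀ A ∈ Γ, ∀ B ∈ Γ, A * B ∈ Γ) (hinf : Γ.Infinite)
    (hirr : ∀ W : Submodule ℝ (Fin n → ℝ),
      (∀ A ∈ Γ, ∀ v ∈ W, (A.map (Int.cast : ℤ → ℝ)) *ᵥ v ∈ W) → W = ⊥ ∨ W = ⊤) :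
    ∃ U ∈ nhds (0 : Fin n → AddCircle (1 : ℝ)), ∀ x : Fin n → AddCircle (1 : ℝ),
      (∀ A ∈ insert (1 : Matrix (Fin n) (Fin n) ℤ) Γ,
        (fun i => ∑ j, A i j • x j) ∈ U) → x = 0 := by
  by_contra hcon
  push_neg at hcon
  classical
  set ε : ℕ → ℝ := fun k => 1 / (k + 4) with hε_def
  have hε : ∀ k : ℕ, 0 < ε k := fun k => by positivity
  have hε4 : ∀ k : ℕ, ε k ≤ 4⁻¹ := by
    intro k
    rw [hε_def]
    have h0 : (0:ℝ) ≤ (k:ℝ) := Nat.cast_nonneg k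
    rw [div_le_iff₀ (by linarith)]
    linarith
  have hsmall : ∀ C : ℝ, 0 ≤ C → ∀ k : ℕ, 2 * C ≤ (k : ℝ) → C * ε k < 2⁻¹ := by
    intro C hC k hk
    have hk4 : (0 : ℝ) < (k : ℝ) + 4 := by positivity
    rw [hε_def]
    rw [show C * (1 / ((k:ℝ) + 4)) = C / ((k:ℝ)+4) by ring, div_lt_iff₀ hk4]
    nlinarith
  -- bad points
  have hball : ∀ k : ℕ, ∃ x : Fin n → AddCircle (1:ℝ), x ≠ 0 ∧
      ∀ A ∈ insert (1 : Matrix (Fin n) (Fin n) ℤ) Γ, ∀ i,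
        ‖(∑ j, A i j • x j : AddCircle (1:ℝ))‖ < ε k := by
    intro k
    obtain ⟨x, hx, hx0⟩ := hcon (Metric.ball 0 (ε k)) (Metric.ball_mem_nhds _ (hε k))
    refine ⟨x, hx0, fun A hA i => ?_⟩
    have h1 := mem_ball_zero_iff.mp (hx A hA)
    exact lt_of_le_of_lt (norm_le_pi_norm (fun i => ∑ j, A i j • x j) i) h1
  choose x hx0 hx using hball
  -- lifts
  have hl : ∀ (k : ℕ) (B : Matrix (Fin n) (Fin n) ℤ), ∃ v : Fin n → ℝ, ∀ i,
      ((v i : ℝ) : AddCircle (1:ℝ)) = ∑ j, B i j • x k j ∧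
        |v i| = ‖(∑ j, B i j • x k j : AddCircle (1:ℝ))‖ := by
    intro k B
    choose v h1 h2 using fun i => tex_exists_rep (∑ j, B i j • x k j)
    exact ⟨v, fun i => ⟨h1 i, h2 i⟩⟩
  choose v hv using hl
  have hvcoe : ∀ k B i, ((v k B i : ℝ) : AddCircle (1:ℝ)) = ∑ j, B i j • x k j :=
    fun k B i => (hv k B i).1
  have hvabs : ∀ (k : ℕ) (B), B ∈ insert (1 : Matrix (Fin n) (Fin n) ℤ) Γ →
      ∀ i, |v k B i| < ε k := by
    intro k B hB i
    rw [(hv k B i).2]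
    exact hx k B hB i
  have hvnorm : ∀ (k : ℕ) (B), B ∈ insert (1 : Matrix (Fin n) (Fin n) ℤ) Γ →
      ‖v k B‖ ≤ ε k := by
    intro k B hB
    refine (pi_norm_le_iff_of_nonneg (hε k).le).mpr fun i => ?_
    rw [Real.norm_eq_abs]
    exact (hvabs k B hB i).le
  set CA : Matrix (Fin n) (Fin n) ℤ → ℝ := fun A => ∑ p, ∑ q, |(A p q : ℝ)| with hCA_def
  have hCA0 : ∀ A, 0 ≤ CA A := fun A =>
    Finset.sum_nonneg fun p _ => Finset.sum_nonneg fun q _ => abs_nonneg _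
  -- commutation of lifts
  have hcomm : ∀ (k : ℕ) (A), A ∈ Γ → ∀ (B), B ∈ insert (1 : Matrix (Fin n) (Fin n) ℤ) Γ →
      CA A * ε k < 2⁻¹ → A.map (Int.cast : ℤ → ℝ) *ᵥ v k B = v k (A * B) := by
    intro k A hA B hB hCAε
    have hAB : A * B ∈ insert (1 : Matrix (Fin n) (Fin n) ℤ) Γ := by
      rcases Set.mem_insert_iff.mp hB with h | h
      · rw [h, mul_one]; exact Set.mem_insert_of_mem _ hA
      · exact Set.mem_insert_of_mem _ (hmul A hA B h)
    funext i
    refine (tex_rep_unique ?_ ?_ ?_)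
    · calc |(A.map (Int.cast : ℤ → ℝ) *ᵥ v k B) i| ≤ CA A * ‖v k B‖ :=
        tex_mulVec_bound A (v k B) i
      _ ≤ CA A * ε k := mul_le_mul_of_nonneg_left (hvnorm k B hB) (hCA0 A)
      _ < 2⁻¹ := hCAε
    · calc |v k (A * B) i| < ε k := hvabs k (A * B) hAB i
      _ ≤ 4⁻¹ := hε4 k
      _ < 2⁻¹ := by norm_num
    · rw [tex_coe_mulVec, hvcoe k (A * B) i]
      rw [tex_act_mul]
      exact Finset.sum_congr rfl fun j _ => by rw [hvcoe k B j]
  -- the sup over the orbit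
  set M : ℕ → ℝ := fun k =>
    sSup ((fun B => ‖v k B‖) '' insert (1 : Matrix (Fin n) (Fin n) ℤ) Γ) with hM_def
  have hbdd : ∀ k, BddAbove ((fun B => ‖v k B‖) '' insert (1 : Matrix (Fin n) (Fin n) ℤ) Γ) :=
    fun k => ⟨ε k, by rintro r ⟨B, hB, rfl⟩; exact hvnorm k B hB⟩
  have hMle : ∀ (k : ℕ) (B), B ∈ insert (1 : Matrix (Fin n) (Fin n) ℤ) Γ → ‖v k B‖ ≤ M k :=
    fun k B hB => le_csSup (hbdd k) ⟨B, hB, rfl⟩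
  have hv1pos : ∀ k, 0 < ‖v k 1‖ := by
    intro k
    rcases eq_or_lt_of_le (norm_nonneg (v k 1)) with h | h
    · exfalso
      apply hx0 k
      funext i
      have h1 : v k 1 = 0 := by rwa [eq_comm, norm_eq_zero] at h
      have h2 := hvcoe k 1 i
      rw [h1] at h2
      rw [← tex_act_one (x k) i, ← h2]
      simp
    · exact h
  have hMpos : ∀ k, 0 < M k := fun k =>
    lt_of_lt_of_le (hv1pos k) (hMle k 1 (Set.mem_insert _ _))
  -- choose near-maximal B
  have hBex : ∀ k : ℕ, ∃ B, B ∈ insert (1 : Matrix (Fin n) (Fin n) ℤ) Γ ∧ M k / 2 < ‖v k B‖ := by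
    intro k
    obtain ⟨r, ⟨B, hB, rfl⟩, hr⟩ :=
      exists_lt_of_lt_csSup (Set.Nonempty.image _ ⟨1, Set.mem_insert _ _⟩)
        (half_lt_self (hMpos k))
    exact ⟨B, hB, hr⟩
  choose B hBmem hBlt using hBex
  have hvBpos : ∀ k, 0 < ‖v k (B k)‖ := by
    intro k
    have h1 := hMpos k
    have h2 := hBlt k
    linarith
  set u : ℕ → (Fin n → ℝ) := fun k => ‖v k (B k)‖⁻¹ • v k (B k) with hu_def
  have hu1 : ∀ k, ‖u k‖ = 1 := by
    intro k
    rw [hu_def]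
    simp only [norm_smul, norm_inv, norm_norm]
    exact inv_mul_cancel₀ (hvBpos k).ne'
  -- eventual bound on the orbit of u k
  have hP4 : ∀ (A), A ∈ Γ → ∀ k : ℕ, CA A * ε k < 2⁻¹ →
      ‖A.map (Int.cast : ℤ → ℝ) *ᵥ u k‖ ≤ 2 := by
    intro A hA k hCAε
    have hABk : A * B k ∈ insert (1 : Matrix (Fin n) (Fin n) ℤ) Γ := by
      rcases Set.mem_insert_iff.mp (hBmem k) with h | h
      · rw [h, mul_one]; exact Set.mem_insert_of_mem _ hA
      · exact Set.mem_insert_of_mem _ (hmul A hA _ h)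
    have h1 : A.map (Int.cast : ℤ → ℝ) *ᵥ u k = ‖v k (B k)‖⁻¹ • v k (A * B k) := by
      rw [hu_def]
      simp only [Matrix.mulVec_smul]
      rw [hcomm k A hA (B k) (hBmem k) hCAε]
    rw [h1, norm_smul, norm_inv, norm_norm]
    have h2 : ‖v k (A * B k)‖ ≤ 2 * ‖v k (B k)‖ := by
      have := hMle k (A * B k) hABk
      have := hBlt k
      linarith
    calc ‖v k (B k)‖⁻¹ * ‖v k (A * B k)‖ ≤ ‖v k (B k)‖⁻¹ * (2 * ‖v k (B k)‖) :=
      mul_le_mul_of_nonneg_left h2 (inv_nonneg.mpr (hvBpos k).le)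
    _ = 2 := by rw [mul_comm (2:ℝ), ← mul_assoc, inv_mul_cancel₀ (hvBpos k).ne', one_mul]
  -- compactness
  have husph : ∀ k, u k ∈ Metric.sphere (0 : Fin n → ℝ) 1 := by
    intro k
    rw [mem_sphere_zero_iff_norm]
    exact hu1 k
  obtain ⟨w, hw, ψ, hψmono, hψtend⟩ :=
    (isCompact_sphere (0 : Fin n → ℝ) 1).tendsto_subseq husph
  have hw1 : ‖w‖ = 1 := mem_sphere_zero_iff_norm.mp hw
  have hw0 : w ≠ 0 := by
    intro h
    rw [h, norm_zero] at hw1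
    norm_num at hw1
  have hbound : ∀ A ∈ Γ, ‖A.map (Int.cast : ℤ → ℝ) *ᵥ w‖ ≤ 2 := by
    intro A hA
    have hcont : Continuous fun z : Fin n → ℝ => ‖A.map (Int.cast : ℤ → ℝ) *ᵥ z‖ := by
      have h1 : Continuous fun z : Fin n → ℝ => A.map (Int.cast : ℤ → ℝ) *ᵥ z := by
        have := (Matrix.mulVecLin (A.map (Int.cast : ℤ → ℝ))).continuous_of_finiteDimensional
        exact this
      exact h1.norm
    have htend : Filter.Tendsto (fun k => ‖A.map (Int.cast : ℤ → ℝ) *ᵥ u (ψ k)‖)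
        Filter.atTop (nhds ‖A.map (Int.cast : ℤ → ℝ) *ᵥ w‖) :=
      (hcont.tendsto w).comp hψtend
    refine le_of_tendsto htend ?_
    filter_upwards [Filter.eventually_ge_atTop ⌈2 * CA A⌉₊] with k hk
    refine hP4 A hA (ψ k) (hsmall (CA A) (hCA0 A) (ψ k) ?_)
    calc 2 * CA A ≤ (⌈2 * CA A⌉₊ : ℝ) := Nat.le_ceil _
    _ ≤ (k : ℝ) := by exact_mod_cast hk
    _ ≤ (ψ k : ℝ) := by exact_mod_cast hψmono.le_apply
  -- the invariant subspace
  set S : Set (Fin n → ℝ) :=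
    insert w ((fun A : Matrix (Fin n) (Fin n) ℤ => A.map (Int.cast : ℤ → ℝ) *ᵥ w) '' Γ)
    with hS_def
  have hSnorm : ∀ s ∈ S, ‖s‖ ≤ 2 := by
    intro s hs
    rcases Set.mem_insert_iff.mp hs with h | ⟨A, hA, rfl⟩
    · rw [h, hw1]; norm_num
    · exact hbound A hA
  have hSinv : ∀ A ∈ Γ, ∀ s ∈ S, A.map (Int.cast : ℤ → ℝ) *ᵥ s ∈ S := by
    intro A hA s hs
    rcases Set.mem_insert_iff.mp hs with h | ⟨Bm, hBm, rfl⟩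
    · rw [h]; exact Set.mem_insert_of_mem _ ⟨A, hA, rfl⟩
    · refine Set.mem_insert_of_mem _ ⟨A * Bm, hmul A hA Bm hBm, ?_⟩
      show (A * Bm).map (Int.cast : ℤ → ℝ) *ᵥ w = A.map (Int.cast : ℤ → ℝ) *ᵥ (Bm.map (Int.cast : ℤ → ℝ) *ᵥ w)
      rw [tex_map_mul, Matrix.mulVec_mulVec]
  set W : Submodule ℝ (Fin n → ℝ) := Submodule.span ℝ S with hW_def
  have hWinv : ∀ A ∈ Γ, ∀ z ∈ W, A.map (Int.cast : ℤ → ℝ) *ᵥ z ∈ W := by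
    intro A hA z hz
    have hle : W ≤ W.comap (Matrix.mulVecLin (A.map (Int.cast : ℤ → ℝ))) := by
      rw [hW_def]
      refine Submodule.span_le.mpr fun s hs => ?_
      refine Submodule.mem_comap.mpr ?_
      have h9 : (Matrix.mulVecLin (A.map (Int.cast : ℤ → ℝ))) s ∈ Submodule.span ℝ S := by
        rw [Matrix.mulVecLin_apply]
        exact Submodule.subset_span (hSinv A hA s hs)
      exact h9
    exact hle hz
  rcases hirr W hWinv with hbot | htop
  · have : w ∈ W := Submodule.subset_span (Set.mem_insert _ _)
    rw [hbot] at this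
    exact hw0 (Submodule.mem_bot ℝ |>.mp this)
  -- column bounds
  have hcol : ∀ j : Fin n, ∃ R : ℝ, ∀ C ∈ Γ, ∀ i : Fin n, |(C i j : ℝ)| ≤ R := by
    intro j
    have hmem : (Pi.single j 1 : Fin n → ℝ) ∈ W := htop ▸ Submodule.mem_top
    rw [hW_def, Submodule.mem_span_set'] at hmem
    obtain ⟨m, f, g, hfg⟩ := hmem
    refine ⟨∑ t, |f t| * 2, fun C hC i => ?_⟩
    have h1 : C.map (Int.cast : ℤ → ℝ) *ᵥ (Pi.single j 1 : Fin n → ℝ)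
        = ∑ t, f t • (C.map (Int.cast : ℤ → ℝ) *ᵥ (g t : Fin n → ℝ)) := by
      rw [← hfg]
      rw [show (C.map (Int.cast : ℤ → ℝ)) *ᵥ (∑ t, f t • (g t : Fin n → ℝ))
          = (Matrix.mulVecLin (C.map (Int.cast : ℤ → ℝ))) (∑ t, f t • (g t : Fin n → ℝ)) from rfl]
      rw [map_sum]
      exact Finset.sum_congr rfl fun t _ => by
        rw [map_smul, Matrix.mulVecLin_apply]
    have h2 : ‖C.map (Int.cast : ℤ → ℝ) *ᵥ (Pi.single j 1 : Fin n → ℝ)‖ ≤ ∑ t, |f t| * 2 := by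
      rw [h1]
      calc ‖∑ t, f t • (C.map (Int.cast : ℤ → ℝ) *ᵥ (g t : Fin n → ℝ))‖
          ≤ ∑ t, ‖f t • (C.map (Int.cast : ℤ → ℝ) *ᵥ (g t : Fin n → ℝ))‖ :=
            norm_sum_le _ _
      _ ≤ ∑ t, |f t| * 2 := by
          refine Finset.sum_le_sum fun t _ => ?_
          rw [norm_smul, Real.norm_eq_abs]
          exact mul_le_mul_of_nonneg_left
            (hSnorm _ (hSinv C hC _ (g t).2)) (abs_nonneg _)
    have h3 : (C.map (Int.cast : ℤ → ℝ) *ᵥ (Pi.single j 1 : Fin n → ℝ)) i = (C i j : ℝ) := by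
      rw [Matrix.mulVec_single]
      simp [Matrix.map_apply]
    calc |(C i j : ℝ)| = ‖(C.map (Int.cast : ℤ → ℝ) *ᵥ (Pi.single j 1 : Fin n → ℝ)) i‖ := by
          rw [h3, Real.norm_eq_abs]
    _ ≤ ‖C.map (Int.cast : ℤ → ℝ) *ᵥ (Pi.single j 1 : Fin n → ℝ)‖ := norm_le_pi_norm _ i
    _ ≤ ∑ t, |f t| * 2 := h2
  choose R hR using hcol
  -- Γ is finite : contradiction
  have hRz : ∀ C ∈ Γ, ∀ (i j : Fin n), -(⌈R j⌉) ≤ C i j ∧ C i j ≤ ⌈R j⌉ := by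
    intro C hC i j
    have h1 : |(C i j : ℝ)| ≤ (⌈R j⌉ : ℝ) := le_trans (hR j C hC i) (Int.le_ceil _)
    have h2 : |C i j| ≤ ⌈R j⌉ := by exact_mod_cast h1
    exact abs_le.mp h2
  have hfin : Finite ↥Γ := by
    haveI : ∀ j : Fin n, Finite ↥(Set.Icc (-(⌈R j⌉)) (⌈R j⌉)) :=
      fun j => (Set.finite_Icc _ _).to_subtype
    refine Finite.of_injective
      (fun C : ↥Γ => (fun i j => (⟨(C : Matrix (Fin n) (Fin n) ℤ) i j,
        Set.mem_Icc.mpr (hRz C C.2 i j)⟩ : ↥(Set.Icc (-(⌈R j⌉)) (⌈R j⌉)))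
        : (i : Fin n) → (j : Fin n) → ↥(Set.Icc (-(⌈R j⌉)) (⌈R j⌉)))) ?_
    intro C D h
    ext i j
    have := congrFun (congrFun h i) j
    exact Subtype.ext_iff.mp this
  exact hinf (Set.finite_coe_iff.mp hfin)
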